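/- Let (A k)_{k ∈ ℤ} be a family of complex Hilbert spaces and for each k let d k : A k →L[ℂ] A (k+1) and e k : A k →L[ℂ] A (k+1) be bounded linear operators. Assume the adjoint commutation relations (d k)† ∘ e k = e (k−1) ∘ (d (k−1))† and (e k)† ∘ d k = d (k−1) ∘ (e (k−1))† hold for all k. Define D k := d k + (−1)^k • e k. Then for every k, (D k)† ∘ (D k) + (D (k−1)) ∘ (D (k−1))† = [(d k)† ∘ d k + d (k−1) ∘ (d (k−1))†] + [(e k)† ∘ e k + e (k−1) ∘ (e (k−1))†], i.e. the total Hodge-Laplacian is the sum of the Hodge-Laplacians of d and of e. -/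
import Mathlib


open ContinuousLinearMap

/-- When the coupling terms vanish (the adjoint commutation relations
`d† ∘ e = e ∘ d†` and `e† ∘ d = d ∘ e†` hold), the Hodge-Laplacian of the total
differential `D k = d k + (−1)^k • e k` is the sum of the Hodge-Laplacians of `d` and `e`
(stated at degree `k + 1`, for all `k : ℤ`, to avoid index casts). -/
theorem total_hodge_laplacian_sum
    {A : ℤ → Type*} [∀ k, NormedAddCommGroup (A k)] [∀ k, InnerProductSpace ℂ (A k)]
    [∀ k, CompleteSpace (A k)]
    (d e : ∀ k : ℤ, A k →L[ℂ] A (k + 1))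
    (hde : ∀ k : ℤ, (adjoint (d (k + 1))).comp (e (k + 1)) = (e k).comp (adjoint (d k)))
    (hed : ∀ k : ℤ, (adjoint (e (k + 1))).comp (d (k + 1)) = (d k).comp (adjoint (e k)))
    (D : ∀ k : ℤ, A k →L[ℂ] A (k + 1))
    (hD : ∀ k : ℤ, D k = d k + ((-1 : ℂ) ^ k) • e k) :
    ∀ k : ℤ,
      (adjoint (D (k + 1))).comp (D (k + 1)) + (D k).comp (adjoint (D k)) =
        ((adjoint (d (k + 1))).comp (d (k + 1)) + (d k).comp (adjoint (d k)))
        + ((adjoint (e (k + 1))).comp (e (k + 1)) + (e k).comp (adjoint (e k))) := by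
  intro k
  have hne : (-1 : ℂ) ≠ 0 := by norm_num
  set c : ℂ := (-1 : ℂ) ^ k with hc
  have hc1 : ((-1 : ℂ) ^ (k + 1)) = -c := by
    rw [zpow_add_one₀ hne, hc]; ring
  have hsq : c * c = 1 := by
    rw [hc, ← mul_zpow]; norm_num
  have hstar : (starRingEnd ℂ) c = c := by
    rw [hc, map_zpow₀]; norm_num
  have hstar' : (starRingEnd ℂ) (-c) = -c := by simp [hstar]
  have hadj : ∀ (m : ℤ) (a : ℂ) (f g : A m →L[ℂ] A (m+1)), (starRingEnd ℂ) a = a →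
      adjoint (f + a • g) = adjoint f + a • adjoint g := by
    intro m a f g ha
    rw [map_add, map_smulₛₗ, ha]
  rw [hD, hD, hc1, hadj _ _ _ _ hstar', hadj _ _ _ _ hstar]
  simp only [add_comp, comp_add, smul_comp, comp_smul, smul_smul, neg_smul, neg_comp,
    comp_neg, neg_neg, smul_neg, smul_add, ← hc, hde, hed, hsq, one_smul]
  abel
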